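/- arXiv:1310.4723 — 10 statements merged into one kernel-verified Lean document; each statement's English description precedes it below -/
import Mathlib

section
/- For y in the open simplex D̊ = {y ∈ (0,1)^N : ∑_k y_k = 1}, the kernel of B(y) is exactly span{y}. -/
/-- For y in the open simplex, the kernel of B(y) is exactly span{y}. -/
theorem maxwell_stefan_B_kernel_span
    (N : ℕ) (hN : 2 ≤ N) (f : Fin N → Fin N → ℝ)
    (hsym : ∀ i j, f i j = f j i)
    (hpos : ∀ i j, i ≠ j → 0 < f i j)
    (hdiag : ∀ i, f i i = 0)
    (y : Fin N → ℝ)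
    (hy : ∀ k, 0 < y k ∧ y k < 1) (hsum : ∑ k, y k = 1)
    (B : Matrix (Fin N) (Fin N) ℝ)
    (hB : ∀ i j, B i j = if i = j then -(∑ l, f i l * y l) else f i j * y i) :
    ∀ x : Fin N → ℝ, B.mulVec x = 0 ↔ ∃ c : ℝ, x = c • y := by
  have hNpos : 0 < N := by omega
  -- key formula for entries of B.mulVec v
  have key : ∀ (v : Fin N → ℝ) (i : Fin N),
      B.mulVec v i = ∑ j, f i j * (y i * v j - y j * v i) := by
    intro v i
    have h1 : ∀ j, B i j * v j
        = f i j * y i * v j + (if j = i then -(∑ l, f i l * y l) * v i else 0) := by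
      intro j
      rw [hB]
      by_cases h : i = j
      · subst h
        simp [hdiag i]
      · have : ¬ (j = i) := fun h' => h h'.symm
        simp [h, this]
    calc B.mulVec v i = ∑ j, B i j * v j := rfl
      _ = ∑ j, (f i j * y i * v j + (if j = i then -(∑ l, f i l * y l) * v i else 0)) := by
          exact Finset.sum_congr rfl fun j _ => h1 j
      _ = (∑ j, f i j * y i * v j) + (-(∑ l, f i l * y l) * v i) := by
          rw [Finset.sum_add_distrib, Finset.sum_ite_eq' Finset.univ i
            (fun _ => -(∑ l, f i l * y l) * v i)]
          simp
      _ = ∑ j, f i j * (y i * v j - y j * v i) := by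
          rw [Finset.sum_congr rfl (fun j _ => show f i j * (y i * v j - y j * v i)
            = f i j * y i * v j - f i j * y j * v i by ring),
            Finset.sum_sub_distrib, ← Finset.sum_mul]
          have : ∑ j, f i j * y j = ∑ l, f i l * y l := rfl
          rw [this]; ring
  intro x
  constructor
  · intro hx
    obtain ⟨i₀, -, hmax⟩ := Finset.exists_max_image Finset.univ (fun k => x k / y k)
      ⟨⟨0, hNpos⟩, Finset.mem_univ _⟩
    refine ⟨x i₀ / y i₀, ?_⟩
    have hsum0 : ∑ j, f i₀ j * (y j * x i₀ - y i₀ * x j) = 0 := by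
      have := congrFun hx i₀
      rw [key x i₀] at this
      have := neg_eq_zero.mpr this
      rw [← Finset.sum_neg_distrib] at this
      calc ∑ j, f i₀ j * (y j * x i₀ - y i₀ * x j)
          = ∑ j, -(f i₀ j * (y i₀ * x j - y j * x i₀)) := by
            exact Finset.sum_congr rfl fun j _ => by ring
        _ = 0 := this
    have hnn : ∀ j ∈ Finset.univ, (0:ℝ) ≤ f i₀ j * (y j * x i₀ - y i₀ * x j) := by
      intro j _
      by_cases h : i₀ = j
      · subst h; simp [hdiag]
      · apply mul_nonneg (le_of_lt (hpos i₀ j h))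
        have hyj := (hy j).1
        have hyi := (hy i₀).1
        have hq : x j / y j ≤ x i₀ / y i₀ := hmax j (Finset.mem_univ j)
        have := (div_le_div_iff₀ hyj hyi).mp hq
        linarith
    have hzero := (Finset.sum_eq_zero_iff_of_nonneg hnn).mp hsum0
    funext j
    have hyj := (hy j).1
    have hyi := (hy i₀).1
    by_cases h : i₀ = j
    · subst h
      simp only [Pi.smul_apply, smul_eq_mul]
      field_simp
    · have hz := hzero j (Finset.mem_univ j)
      have hf := hpos i₀ j h
      have h2 : y j * x i₀ - y i₀ * x j = 0 := by
        rcases mul_eq_zero.mp hz with h' | h'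
        · exact absurd h' (ne_of_gt hf)
        · exact h'
      simp only [Pi.smul_apply, smul_eq_mul]
      field_simp
      linarith [h2]
  · rintro ⟨c, rfl⟩
    funext i
    rw [Pi.zero_apply, key]
    apply Finset.sum_eq_zero
    intro j _
    simp only [Pi.smul_apply, smul_eq_mul]
    ring
end

section
/- For y in the open simplex D̊, the restriction of B(y) to the subspace E = {x : ∑_k x_k = 0} is a bijective linear map from E to E. -/
/-- For y ∈ D̊, the restriction of B(y) to E = {x : ∑ x_k = 0}
is a bijective linear map from E onto E. -/
theorem maxwell_stefan_B_bijective_on_E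
    (N : ℕ) (hN : 2 ≤ N) (f : Fin N → Fin N → ℝ)
    (hsym : ∀ i j, f i j = f j i)
    (hpos : ∀ i j, i ≠ j → 0 < f i j)
    (hdiag : ∀ i, f i i = 0)
    (y : Fin N → ℝ)
    (hy : ∀ k, 0 < y k ∧ y k < 1) (hsum : ∑ k, y k = 1)
    (B : Matrix (Fin N) (Fin N) ℝ)
    (hB : ∀ i j, B i j = if i = j then -(∑ l, f i l * y l) else f i j * y i) :
    (∀ x : Fin N → ℝ, ∑ i, x i = 0 → B.mulVec x = 0 → x = 0) ∧
    (∀ z : Fin N → ℝ, ∑ i, z i = 0 → ∃ x : Fin N → ℝ, ∑ i, x i = 0 ∧ B.mulVec x = z) := by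
  -- basic facts
  have hy0 : ∀ k, y k ≠ 0 := fun k => ne_of_gt (hy k).1
  -- formula for mulVec
  have hmv : ∀ (x : Fin N → ℝ) (i : Fin N),
      B.mulVec x i = ∑ j, f i j * (y i * x j - y j * x i) := by
    intro x i
    have h1 : ∀ j, B i j * x j
        = f i j * y i * x j - (if j = i then (∑ l, f i l * y l) * x i else 0) := by
      intro j
      rw [hB]
      by_cases h : i = j
      · subst h; simp [hdiag i]
      · simp [h, Ne.symm h]
    simp only [Matrix.mulVec, dotProduct]
    rw [Finset.sum_congr rfl (fun j _ => h1 j), Finset.sum_sub_distrib,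
      Finset.sum_ite_eq' Finset.univ i (fun _ => (∑ l, f i l * y l) * x i)]
    simp only [Finset.mem_univ, if_true, Finset.sum_mul]
    rw [← Finset.sum_sub_distrib]
    exact Finset.sum_congr rfl (fun j _ => by ring)
  -- B maps everything into E
  have key : ∀ x : Fin N → ℝ, ∑ i, B.mulVec x i = 0 := by
    intro x
    have h1 : ∑ i, B.mulVec x i = ∑ i, ∑ j, f i j * (y i * x j - y j * x i) :=
      Finset.sum_congr rfl (fun i _ => hmv x i)
    have h2 : ∑ i, ∑ j, f i j * (y i * x j - y j * x i)
        = ∑ j, ∑ i, f i j * (y i * x j - y j * x i) := Finset.sum_comm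
    have h3 : ∑ j, ∑ i, f i j * (y i * x j - y j * x i)
        = -∑ j, ∑ i, f j i * (y j * x i - y i * x j) := by
      rw [← Finset.sum_neg_distrib]
      apply Finset.sum_congr rfl; intro j _
      rw [← Finset.sum_neg_distrib]
      apply Finset.sum_congr rfl; intro i _
      rw [hsym i j]; ring
    rw [h1] at *
    linarith [h2, h3]
  -- injectivity on E
  have inj : ∀ x : Fin N → ℝ, ∑ i, x i = 0 → B.mulVec x = 0 → x = 0 := by
    intro x hx hBx
    have hBf : ∀ i, ∑ j, f i j * (y i * x j - y j * x i) = 0 := by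
      intro i
      have := congrFun hBx i
      rw [hmv x i] at this; simpa using this
    -- quadratic form
    set T : ℝ := ∑ i, ∑ j, f i j * (y i * x j - y j * x i)^2 / (y i * y j) with hT
    have hterm : ∀ i j, f i j * (y i * x j - y j * x i)^2 / (y i * y j)
        = (f i j * (y i * x j - y j * x i)) * (x j / y j)
          - (f i j * (y i * x j - y j * x i)) * (x i / y i) := by
      intro i j
      have hi := hy0 i
      have hj := hy0 j
      field_simp
    have hT2 : T = ∑ i, ∑ j, ((f i j * (y i * x j - y j * x i)) * (x j / y j))
        - ∑ i, ∑ j, ((f i j * (y i * x j - y j * x i)) * (x i / y i)) := by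
      rw [hT, ← Finset.sum_sub_distrib]
      apply Finset.sum_congr rfl; intro i _
      rw [← Finset.sum_sub_distrib]
      exact Finset.sum_congr rfl (fun j _ => hterm i j)
    have hA : ∑ i, ∑ j, ((f i j * (y i * x j - y j * x i)) * (x i / y i)) = 0 := by
      apply Finset.sum_eq_zero; intro i _
      rw [← Finset.sum_mul, hBf i, zero_mul]
    have hC : ∑ i, ∑ j, ((f i j * (y i * x j - y j * x i)) * (x j / y j)) = 0 := by
      rw [Finset.sum_comm]
      apply Finset.sum_eq_zero; intro j _
      rw [← Finset.sum_mul]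
      have : ∑ i, f i j * (y i * x j - y j * x i)
          = -∑ i, f j i * (y j * x i - y i * x j) := by
        rw [← Finset.sum_neg_distrib]
        apply Finset.sum_congr rfl; intro i _
        rw [hsym i j]; ring
      rw [this, hBf j, neg_zero, zero_mul]
    have hT0 : T = 0 := by rw [hT2, hA, hC]; ring
    have hnonneg : ∀ i ∈ (Finset.univ : Finset (Fin N)),
        (0:ℝ) ≤ ∑ j, f i j * (y i * x j - y j * x i)^2 / (y i * y j) := by
      intro i _
      apply Finset.sum_nonneg; intro j _
      apply div_nonneg
      · apply mul_nonneg _ (sq_nonneg _)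
        rcases eq_or_ne i j with h | h
        · subst h; rw [hdiag]
        · exact le_of_lt (hpos i j h)
      · exact le_of_lt (mul_pos (hy i).1 (hy j).1)
    have heach : ∀ i j, y i * x j = y j * x i := by
      intro i j
      rcases eq_or_ne i j with h | h
      · subst h; ring
      · have h1 := (Finset.sum_eq_zero_iff_of_nonneg hnonneg).mp hT0 i (Finset.mem_univ i)
        have hnn : ∀ j ∈ (Finset.univ : Finset (Fin N)),
            (0:ℝ) ≤ f i j * (y i * x j - y j * x i)^2 / (y i * y j) := by
          intro j _
          apply div_nonneg
          · apply mul_nonneg _ (sq_nonneg _)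
            rcases eq_or_ne i j with h' | h'
            · subst h'; rw [hdiag]
            · exact le_of_lt (hpos i j h')
          · exact le_of_lt (mul_pos (hy i).1 (hy j).1)
        have h2 := (Finset.sum_eq_zero_iff_of_nonneg hnn).mp h1 j (Finset.mem_univ j)
        have hfpos := hpos i j h
        have hypos := mul_pos (hy i).1 (hy j).1
        have : (y i * x j - y j * x i)^2 = 0 := by
          by_contra hne
          have hsq : 0 < (y i * x j - y j * x i)^2 :=
            lt_of_le_of_ne (sq_nonneg _) (Ne.symm hne)
          have : 0 < f i j * (y i * x j - y j * x i)^2 / (y i * y j) :=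
            div_pos (mul_pos hfpos hsq) hypos
          linarith
        have := pow_eq_zero_iff (n := 2) (by norm_num) |>.mp this
        linarith
    funext i
    have : ∑ j, y i * x j = ∑ j, y j * x i :=
      Finset.sum_congr rfl (fun j _ => heach i j)
    rw [← Finset.mul_sum, ← Finset.sum_mul, hx, hsum, mul_zero] at this
    simpa using this.symm
  refine ⟨inj, ?_⟩
  -- surjectivity via finite-dimensional linear algebra
  intro z hz
  set l : (Fin N → ℝ) →ₗ[ℝ] ℝ := ∑ i, LinearMap.proj i with hl
  have hlapp : ∀ x : Fin N → ℝ, l x = ∑ i, x i := by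
    intro x; rw [hl]; simp [LinearMap.sum_apply]
  set E : Submodule ℝ (Fin N → ℝ) := LinearMap.ker l with hE
  have hmemE : ∀ x : Fin N → ℝ, x ∈ E ↔ ∑ i, x i = 0 := by
    intro x; rw [hE, LinearMap.mem_ker, hlapp]
  have hmaps : ∀ x ∈ E, B.mulVecLin x ∈ E := by
    intro x _
    rw [hmemE]
    exact key x
  set L : E →ₗ[ℝ] E := (B.mulVecLin).restrict hmaps with hL
  have hLinj : Function.Injective L := by
    rw [injective_iff_map_eq_zero]
    intro a ha
    have h1 : B.mulVec a.1 = 0 := by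
      have := congrArg Subtype.val ha
      simpa [hL, LinearMap.restrict_apply, Matrix.mulVecLin_apply] using this
    have h2 : (a : Fin N → ℝ) = 0 := inj a.1 ((hmemE a.1).mp a.2) h1
    exact Subtype.ext h2
  have hLsurj : Function.Surjective L := LinearMap.surjective_of_injective hLinj
  obtain ⟨x, hxz⟩ := hLsurj ⟨z, (hmemE z).mpr hz⟩
  refine ⟨x.1, (hmemE x.1).mp x.2, ?_⟩
  have := congrArg Subtype.val hxz
  simpa [hL, LinearMap.restrict_apply, Matrix.mulVecLin_apply] using this
end

section
/- For every y in the closed simplex D = {y ∈ [0,1]^N : ∑_k y_k = 1}, the restriction of B(y) to E = {x : ∑_k x_k = 0} is injective (and hence invertible on E), even when some components y_k vanish. -/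
/-- For every y in the closed simplex D, the restriction of B(y) to E
is injective, even when some components of y vanish. -/
theorem maxwell_stefan_B_injective_on_E_closed_simplex
    (N : ℕ) (hN : 2 ≤ N) (f : Fin N → Fin N → ℝ)
    (hsym : ∀ i j, f i j = f j i)
    (hpos : ∀ i j, i ≠ j → 0 < f i j)
    (hdiag : ∀ i, f i i = 0)
    (y : Fin N → ℝ)
    (hy : ∀ k, 0 ≤ y k ∧ y k ≤ 1) (hsum : ∑ k, y k = 1)
    (B : Matrix (Fin N) (Fin N) ℝ)
    (hB : ∀ i j, B i j = if i = j then -(∑ l, f i l * y l) else f i j * y i) :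
    ∀ x : Fin N → ℝ, ∑ i, x i = 0 → B.mulVec x = 0 → x = 0 := by
  intro x hx hBx
  have hy0 : ∀ i, 0 ≤ y i := fun i => (hy i).1
  have hf0 : ∀ i j, 0 ≤ f i j := by
    intro i j
    by_cases h : i = j
    · subst h; rw [hdiag]
    · exact (hpos i j h).le
  have hBx' : ∀ i, ∑ j, B i j * x j = 0 := by
    intro i
    have := congrFun hBx i
    simpa [Matrix.mulVec, dotProduct] using this
  -- rewrite row sums
  have key : ∀ i, ∑ j, B i j * x j
      = y i * (∑ j, f i j * x j) - (∑ l, f i l * y l) * x i := by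
    intro i
    have hterm : ∀ j, B i j * x j
        = f i j * y i * x j + (if i = j then -(∑ l, f i l * y l) * x j else 0) := by
      intro j
      rw [hB]
      by_cases h : i = j
      · subst h; simp [hdiag]
      · simp [h]
    rw [Finset.sum_congr rfl (fun j _ => hterm j), Finset.sum_add_distrib,
      Finset.sum_ite_eq]
    simp [Finset.mul_sum]
    ring_nf
    rw [Finset.sum_congr rfl (fun j _ => by ring :
      ∀ j ∈ Finset.univ, f i j * y i * x j = y i * (f i j * x j))]
    rw [← Finset.mul_sum]
    rw [Finset.sum_congr rfl (fun j _ => by ring :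
      ∀ j ∈ Finset.univ, y i * f i j * x j = y i * (f i j * x j)), ← Finset.mul_sum]
    ring
  -- positivity of the diagonal weight when y i = 0
  have hpos_sum : ∀ i, y i = 0 → 0 < ∑ l, f i l * y l := by
    intro i hyi
    obtain ⟨l, _, hl⟩ : ∃ l ∈ Finset.univ, 0 < y l := by
      by_contra h
      push_neg at h
      have : ∑ k, y k = 0 :=
        Finset.sum_eq_zero (fun k hk => le_antisymm (h k hk) (hy0 k))
      rw [this] at hsum; norm_num at hsum
    have hil : i ≠ l := by rintro rfl; exact hl.ne' hyi
    refine Finset.sum_pos' (fun j _ => mul_nonneg (hf0 i j) (hy0 j)) ⟨l, Finset.mem_univ l, ?_⟩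
    exact mul_pos (hpos i l hil) hl
  -- x vanishes where y vanishes
  have hx0 : ∀ i, y i = 0 → x i = 0 := by
    intro i hyi
    have h1 := hBx' i
    rw [key i, hyi] at h1
    have h2 : (∑ l, f i l * y l) * x i = 0 := by linarith
    exact (mul_eq_zero.mp h2).resolve_left (ne_of_gt (hpos_sum i hyi))
  -- define z
  set z : Fin N → ℝ := fun i => if y i = 0 then 0 else x i / y i with hzdef
  have hxz : ∀ i, x i = y i * z i := by
    intro i
    by_cases h : y i = 0
    · simp [hzdef, h, hx0 i h]
    · simp only [hzdef, h, if_false]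
      field_simp
  have key2 : ∀ i, ∑ j, f i j * (y i * y j) * (z j - z i) = 0 := by
    intro i
    have h1 := hBx' i
    rw [key i] at h1
    have : ∑ j, f i j * (y i * y j) * (z j - z i)
        = y i * (∑ j, f i j * x j) - (∑ l, f i l * y l) * x i := by
      rw [Finset.mul_sum, Finset.sum_mul, ← Finset.sum_sub_distrib]
      refine Finset.sum_congr rfl (fun j _ => ?_)
      rw [hxz i, hxz j]; ring
    rw [this]; exact h1
  have hsum2 : ∑ i, ∑ j, f i j * (y i * y j) * (z i * (z j - z i)) = 0 := by
    have : ∀ i, ∑ j, f i j * (y i * y j) * (z i * (z j - z i))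
        = z i * ∑ j, f i j * (y i * y j) * (z j - z i) := by
      intro i
      rw [Finset.mul_sum]
      exact Finset.sum_congr rfl (fun j _ => by ring)
    rw [Finset.sum_congr rfl (fun i _ => this i)]
    exact Finset.sum_eq_zero (fun i _ => by rw [key2 i, mul_zero])
  have hswap : ∑ i, ∑ j, f i j * (y i * y j) * (z j * (z i - z j))
      = ∑ i, ∑ j, f i j * (y i * y j) * (z i * (z j - z i)) := by
    rw [Finset.sum_comm]
    refine Finset.sum_congr rfl (fun i _ => Finset.sum_congr rfl (fun j _ => ?_))
    rw [hsym]; ring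
  have hQ : ∑ i, ∑ j, f i j * (y i * y j) * (z i - z j) ^ 2 = 0 := by
    have h1 : ∑ i, ∑ j, (f i j * (y i * y j) * (z i - z j) ^ 2
        + f i j * (y i * y j) * (z i * (z j - z i))
        + f i j * (y i * y j) * (z j * (z i - z j))) = 0 := by
      refine Finset.sum_eq_zero (fun i _ => Finset.sum_eq_zero (fun j _ => by ring))
    simp only [Finset.sum_add_distrib] at h1
    linarith [hswap, hsum2]
  -- each term of Q vanishes
  have hterm0 : ∀ i j, f i j * (y i * y j) * (z i - z j) ^ 2 = 0 := by
    have hnn : ∀ i j, 0 ≤ f i j * (y i * y j) * (z i - z j) ^ 2 := by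
      intro i j
      exact mul_nonneg (mul_nonneg (hf0 i j) (mul_nonneg (hy0 i) (hy0 j))) (sq_nonneg _)
    intro i j
    have houter := (Finset.sum_eq_zero_iff_of_nonneg
      (fun i _ => Finset.sum_nonneg (fun j _ => hnn i j))).mp hQ i (Finset.mem_univ i)
    exact (Finset.sum_eq_zero_iff_of_nonneg (fun j _ => hnn i j)).mp houter j (Finset.mem_univ j)
  -- proportionality
  have hprop : ∀ i j, x i * y j = x j * y i := by
    intro i j
    by_cases hyi : y i = 0
    · rw [hx0 i hyi, hyi]; ring
    by_cases hyj : y j = 0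
    · rw [hx0 j hyj, hyj]; ring
    by_cases hij : i = j
    · subst hij; ring
    have hzij : z i = z j := by
      have h := hterm0 i j
      have hne : f i j * (y i * y j) ≠ 0 :=
        ne_of_gt (mul_pos (hpos i j hij)
          (mul_pos (lt_of_le_of_ne (hy0 i) (Ne.symm hyi)) (lt_of_le_of_ne (hy0 j) (Ne.symm hyj))))
      have := (mul_eq_zero.mp h).resolve_left hne
      have := pow_eq_zero_iff (n := 2) (by norm_num) |>.mp this
      linarith [this]
    rw [hxz i, hxz j, hzij]; ring
  -- conclude
  funext i
  have : x i = ∑ j, x j * y i := by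
    calc x i = x i * ∑ j, y j := by rw [hsum, mul_one]
    _ = ∑ j, x i * y j := by rw [Finset.mul_sum]
    _ = ∑ j, x j * y i := Finset.sum_congr rfl (fun j _ => hprop i j)
  rw [← Finset.sum_mul, hx, zero_mul] at this
  simpa using this
end

section
/- If y ∈ D with y_k = 0 for some index k, and x ∈ E satisfies B(y)x = 0, then x_k = 0. -/
/-- If y ∈ D with y_k = 0 for some index k, and x ∈ E satisfies
B(y)x = 0, then x_k = 0. -/
theorem maxwell_stefan_vanishing_component
    (N : ℕ) (hN : 2 ≤ N) (f : Fin N → Fin N → ℝ)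
    (hsym : ∀ i j, f i j = f j i)
    (hpos : ∀ i j, i ≠ j → 0 < f i j)
    (hdiag : ∀ i, f i i = 0)
    (y : Fin N → ℝ)
    (hy : ∀ k, 0 ≤ y k ∧ y k ≤ 1) (hsum : ∑ k, y k = 1)
    (B : Matrix (Fin N) (Fin N) ℝ)
    (hB : ∀ i j, B i j = if i = j then -(∑ l, f i l * y l) else f i j * y i)
    (k : Fin N) (hk : y k = 0)
    (x : Fin N → ℝ) (hx : ∑ i, x i = 0) (hBx : B.mulVec x = 0) :
    x k = 0 := by
  have hrow : ∑ j, B k j * x j = 0 := by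
    have := congrFun hBx k
    simpa [Matrix.mulVec, dotProduct] using this
  have hoff : ∀ j, j ≠ k → B k j * x j = 0 := by
    intro j hj
    rw [hB k j, if_neg (Ne.symm hj), hk]
    ring
  have hdiagrow : B k k * x k = 0 := by
    rw [← hrow]
    rw [Finset.sum_eq_single k]
    · intro j _ hj; exact hoff j hj
    · intro h; exact absurd (Finset.mem_univ k) h
  -- show the diagonal entry is negative
  have hspos : 0 < ∑ l, f k l * y l := by
    obtain ⟨l, hl⟩ : ∃ l, 0 < y l := by
      by_contra h
      push_neg at h
      have : ∑ l, y l ≤ 0 := Finset.sum_nonpos (fun l _ => h l)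
      linarith [hsum]
    have hlk : l ≠ k := by intro h; rw [h, hk] at hl; linarith
    refine Finset.sum_pos' (fun i _ => ?_) ⟨l, Finset.mem_univ l, mul_pos (hpos k l (Ne.symm hlk)) hl⟩
    rcases eq_or_ne k i with h | h
    · simp [← h, hdiag]
    · exact mul_nonneg (le_of_lt (hpos k i h)) (hy i).1
  have hBkk : B k k = -(∑ l, f k l * y l) := by rw [hB]; simp
  rw [hBkk] at hdiagrow
  have : x k * (∑ l, f k l * y l) = 0 := by linarith [hdiagrow]
  rcases mul_eq_zero.mp this with h | h
  · exact h
  · linarith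
end

section
/- For y ∈ D̊, the symmetric matrix B_S(y) = Y^{-1/2} B(y) Y^{1/2} is negative semidefinite: for all w ∈ ℝ^N, (B_S(y) w | w) ≤ 0. -/
/-- For y ∈ D̊, the symmetric matrix B_S(y) is negative semidefinite:
(B_S(y) w | w) ≤ 0 for all w. -/
theorem maxwell_stefan_BS_negative_semidefinite
    (N : ℕ) (hN : 2 ≤ N) (f : Fin N → Fin N → ℝ)
    (hsym : ∀ i j, f i j = f j i)
    (hpos : ∀ i j, i ≠ j → 0 < f i j)
    (hdiag : ∀ i, f i i = 0)
    (y : Fin N → ℝ)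
    (hy : ∀ k, 0 < y k ∧ y k < 1) (hsum : ∑ k, y k = 1)
    (BS : Matrix (Fin N) (Fin N) ℝ)
    (hBS : ∀ i j, BS i j =
      if i = j then -(∑ k, f i k * y k) else f i j * Real.sqrt (y i * y j)) :
    ∀ w : Fin N → ℝ, ∑ i, BS.mulVec w i * w i ≤ 0 := by
  intro w
  have hy0 : ∀ k, (0:ℝ) ≤ y k := fun k => (hy k).1.le
  have hf0 : ∀ i j, 0 ≤ f i j := by
    intro i j
    rcases eq_or_ne i j with h | h
    · simp [h, hdiag]
    · exact (hpos i j h).le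
  set s : Fin N → ℝ := fun k => Real.sqrt (y k) with hs
  have hsq : ∀ k, s k ^ 2 = y k := fun k => Real.sq_sqrt (hy0 k)
  have hBS' : ∀ i j, BS i j = f i j * (s i * s j)
      - (if i = j then ∑ k, f i k * y k else 0) := by
    intro i j
    rw [hBS]
    split
    · next h => simp [h, hdiag]
    · rw [Real.sqrt_mul (hy0 i)]; ring
  -- rewrite the quadratic form
  have hQ : ∑ i, BS.mulVec w i * w i =
      (∑ i, ∑ j, f i j * (s i * s j) * (w i * w j))
        - (∑ i, ∑ j, f i j * y j * w i ^ 2) := by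
    simp only [Matrix.mulVec, dotProduct, Finset.sum_mul]
    rw [← Finset.sum_sub_distrib]
    refine Finset.sum_congr rfl fun i _ => ?_
    rw [← Finset.sum_sub_distrib]
    have : ∀ j, BS i j * w j * w i =
        (f i j * (s i * s j) * (w i * w j))
          - (if i = j then ∑ k, f i k * y k else 0) * (w j * w i) := by
      intro j; rw [hBS']; ring
    simp only [this]
    simp only [ite_mul, zero_mul]
    rw [Finset.sum_sub_distrib, Finset.sum_sub_distrib,
      Finset.sum_ite_eq Finset.univ i (fun x => (∑ k, f i k * y k) * (w x * w i))]
    simp only [Finset.mem_univ, if_true]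
    congr 1
    rw [Finset.sum_mul]
    refine Finset.sum_congr rfl fun j _ => ?_
    ring
  have hA : ∀ i j, f i j * (s j * w i - s i * w j) ^ 2 =
      f i j * y j * w i ^ 2 + f i j * y i * w j ^ 2
        - 2 * (f i j * (s i * s j) * (w i * w j)) := by
    intro i j
    linear_combination f i j * w i ^ 2 * hsq j + f i j * w j ^ 2 * hsq i
  have hswap : ∑ i, ∑ j, f i j * y i * w j ^ 2 = ∑ i, ∑ j, f i j * y j * w i ^ 2 := by
    rw [Finset.sum_comm]
    refine Finset.sum_congr rfl fun i _ => Finset.sum_congr rfl fun j _ => ?_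
    rw [hsym i j]
  have hsumA : ∑ i, ∑ j, f i j * (s j * w i - s i * w j) ^ 2 =
      2 * (∑ i, ∑ j, f i j * y j * w i ^ 2)
        - 2 * (∑ i, ∑ j, f i j * (s i * s j) * (w i * w j)) := by
    simp only [hA, Finset.sum_sub_distrib, Finset.sum_add_distrib, ← Finset.mul_sum]
    rw [hswap]; ring
  have hnn : 0 ≤ ∑ i, ∑ j, f i j * (s j * w i - s i * w j) ^ 2 := by
    refine Finset.sum_nonneg fun i _ => Finset.sum_nonneg fun j _ => ?_
    exact mul_nonneg (hf0 i j) (sq_nonneg _)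
  rw [hQ]
  linarith
end

section
/- For y ∈ D̊ and w ∈ ℝ^N, one has (B_S(y) w | w) = 0 if and only if w ∈ span{y^{1/2}}, where y^{1/2} = (y_1^{1/2},...,y_N^{1/2}). -/
/-- For y ∈ D̊ and w ∈ ℝ^N, (B_S(y)w | w) = 0 iff w ∈ span{y^{1/2}}. -/
theorem maxwell_stefan_BS_quadratic_form_zero
    (N : ℕ) (hN : 2 ≤ N) (f : Fin N → Fin N → ℝ)
    (hsym : ∀ i j, f i j = f j i)
    (hpos : ∀ i j, i ≠ j → 0 < f i j)
    (hdiag : ∀ i, f i i = 0)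
    (y : Fin N → ℝ)
    (hy : ∀ k, 0 < y k ∧ y k < 1) (hsum : ∑ k, y k = 1)
    (BS : Matrix (Fin N) (Fin N) ℝ)
    (hBS : ∀ i j, BS i j =
      if i = j then -(∑ k, f i k * y k) else f i j * Real.sqrt (y i * y j)) :
    ∀ w : Fin N → ℝ,
      (∑ i, BS.mulVec w i * w i = 0 ↔
        ∃ c : ℝ, w = c • (fun i => Real.sqrt (y i))) := by
  intro w
  have hy0 : ∀ k, 0 < y k := fun k => (hy k).1
  have hs0 : ∀ k, 0 < Real.sqrt (y k) := fun k => Real.sqrt_pos.mpr (hy0 k)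
  have hf0 : ∀ i j, 0 ≤ f i j := by
    intro i j
    by_cases h : i = j
    · subst h; rw [hdiag]
    · exact (hpos i j h).le
  have hsq : ∀ k, Real.sqrt (y k) ^ 2 = y k := fun k => Real.sq_sqrt (hy0 k).le
  -- mulVec formula
  have hmv : ∀ i, BS.mulVec w i =
      (∑ j, f i j * (Real.sqrt (y i) * Real.sqrt (y j)) * w j)
        - (∑ j, f i j * y j) * w i := by
    intro i
    have hrfl : BS.mulVec w i = ∑ j, BS i j * w j := rfl
    rw [hrfl]
    have h1 : ∀ j ∈ Finset.univ, BS i j * w j =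
        f i j * (Real.sqrt (y i) * Real.sqrt (y j)) * w j
          + (if j = i then (-(∑ k, f i k * y k)) * w i else 0) := by
      intro j _
      by_cases h : i = j
      · subst h; rw [hBS, if_pos rfl, hdiag]; simp
      · rw [hBS, if_neg h, if_neg (fun e : j = i => h e.symm),
          Real.sqrt_mul (hy0 i).le]
        ring
    rw [Finset.sum_congr rfl h1, Finset.sum_add_distrib,
      Finset.sum_ite_eq' Finset.univ i (fun _ => (-(∑ k, f i k * y k)) * w i)]
    simp only [Finset.mem_univ, if_true]
    ring
  have h1i : ∀ i, BS.mulVec w i * w i =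
      ∑ j, (f i j * (Real.sqrt (y i) * Real.sqrt (y j)) * w j * w i
        - f i j * y j * w i ^ 2) := by
    intro i
    rw [hmv i, sub_mul]
    simp only [Finset.sum_mul]
    rw [← Finset.sum_sub_distrib]
    exact Finset.sum_congr rfl fun j _ => by ring
  set SA : ℝ := ∑ i, ∑ j, f i j * (Real.sqrt (y i) * Real.sqrt (y j)) * w j * w i with hSA
  set SB : ℝ := ∑ i, ∑ j, f i j * y j * w i ^ 2 with hSB
  set SC : ℝ := ∑ i, ∑ j, f i j * y i * w j ^ 2 with hSC
  have h1 : ∑ i, BS.mulVec w i * w i = SA - SB := by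
    rw [Finset.sum_congr rfl fun i _ => h1i i]
    simp only [Finset.sum_sub_distrib]
    rfl
  have hswap : SC = SB := by
    rw [hSC, hSB, Finset.sum_comm]
    exact Finset.sum_congr rfl fun i _ => Finset.sum_congr rfl fun j _ => by
      rw [hsym]
  have expand : ∀ i j, f i j * (Real.sqrt (y j) * w i - Real.sqrt (y i) * w j) ^ 2
      = f i j * y j * w i ^ 2
        - 2 * (f i j * (Real.sqrt (y i) * Real.sqrt (y j)) * w j * w i)
        + f i j * y i * w j ^ 2 := by
    intro i j
    have e : (Real.sqrt (y j) * w i - Real.sqrt (y i) * w j) ^ 2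
        = Real.sqrt (y j) ^ 2 * w i ^ 2
          - 2 * (Real.sqrt (y i) * Real.sqrt (y j)) * (w j * w i)
          + Real.sqrt (y i) ^ 2 * w j ^ 2 := by ring
    rw [e, hsq i, hsq j]; ring
  have h2 : (∑ i, ∑ j, f i j * (Real.sqrt (y j) * w i - Real.sqrt (y i) * w j) ^ 2)
      = SB - 2 * SA + SC := by
    rw [hSA, hSB, hSC]
    simp only [expand, Finset.sum_add_distrib, Finset.sum_sub_distrib,
      ← Finset.mul_sum]
  have hmain : ∑ i, BS.mulVec w i * w i
      = -(1/2) * ∑ i, ∑ j, f i j * (Real.sqrt (y j) * w i - Real.sqrt (y i) * w j) ^ 2 := by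
    rw [h1, h2, hswap]; ring
  constructor
  · intro h0
    have hQ : (∑ i, ∑ j, f i j * (Real.sqrt (y j) * w i - Real.sqrt (y i) * w j) ^ 2) = 0 := by
      rw [hmain] at h0; linarith
    have hterm0 : ∀ i j, f i j * (Real.sqrt (y j) * w i - Real.sqrt (y i) * w j) ^ 2 = 0 := by
      have hnn : ∀ i j, 0 ≤ f i j * (Real.sqrt (y j) * w i - Real.sqrt (y i) * w j) ^ 2 :=
        fun i j => mul_nonneg (hf0 i j) (sq_nonneg _)
      have houter := (Finset.sum_eq_zero_iff_of_nonneg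
        (fun i _ => Finset.sum_nonneg fun j _ => hnn i j)).mp hQ
      intro i j
      exact (Finset.sum_eq_zero_iff_of_nonneg (fun j _ => hnn i j)).mp
        (houter i (Finset.mem_univ i)) j (Finset.mem_univ j)
    have hrel : ∀ i j, i ≠ j → Real.sqrt (y j) * w i = Real.sqrt (y i) * w j := by
      intro i j hij
      have := hterm0 i j
      have hne : f i j ≠ 0 := ne_of_gt (hpos i j hij)
      have : (Real.sqrt (y j) * w i - Real.sqrt (y i) * w j) ^ 2 = 0 := by
        rcases mul_eq_zero.mp this with h | h
        · exact absurd h hne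
        · exact h
      have := pow_eq_zero_iff (n := 2) (by norm_num) |>.mp this
      linarith
    set i0 : Fin N := ⟨0, by omega⟩ with hi0
    refine ⟨w i0 / Real.sqrt (y i0), ?_⟩
    funext i
    simp only [Pi.smul_apply, smul_eq_mul]
    by_cases h : i = i0
    · subst h
      rw [div_mul_cancel₀ _ (ne_of_gt (hs0 i0))]
    · have := hrel i i0 h
      have hne : Real.sqrt (y i0) ≠ 0 := ne_of_gt (hs0 i0)
      field_simp
      linarith [this]
  · rintro ⟨c, rfl⟩
    rw [hmain]
    have : (∑ i, ∑ j, f i j *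
        (Real.sqrt (y j) * (c • fun k => Real.sqrt (y k)) i
          - Real.sqrt (y i) * (c • fun k => Real.sqrt (y k)) j) ^ 2) = 0 := by
      apply Finset.sum_eq_zero
      intro i _
      apply Finset.sum_eq_zero
      intro j _
      simp only [Pi.smul_apply, smul_eq_mul]
      ring_nf
    rw [this]; ring
end

section
/- Every real eigenvalue λ of A_0(y) = -A(y)P(y)M^{-1} restricted to E, for y ∈ D̊, is strictly positive. Equivalently: if v ∈ E, v ≠ 0, and P(y)M^{-1} v = -λ B(y) v, then λ > 0. -/
/-- Every real eigenvalue λ of A_0(y) = -A(y)P(y)M^{-1} on E, for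
y ∈ D̊, is strictly positive: if v ∈ E, v ≠ 0, and P(y)M^{-1}v = -λ B(y)v, then λ > 0. -/
theorem maxwell_stefan_eigenvalues_positive
    (N : ℕ) (hN : 2 ≤ N) (f : Fin N → Fin N → ℝ)
    (hsym : ∀ i j, f i j = f j i)
    (hpos : ∀ i j, i ≠ j → 0 < f i j)
    (hdiag : ∀ i, f i i = 0)
    (M : Fin N → ℝ) (hM : ∀ k, 0 < M k)
    (y : Fin N → ℝ)
    (hy : ∀ k, 0 < y k ∧ y k < 1) (hsum : ∑ k, y k = 1)
    (B : Matrix (Fin N) (Fin N) ℝ)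
    (hB : ∀ i j, B i j = if i = j then -(∑ l, f i l * y l) else f i j * y i)
    (lam : ℝ) (v : Fin N → ℝ)
    (hvE : ∑ i, v i = 0) (hv0 : v ≠ 0)
    (heig : ∀ i, (M i)⁻¹ * v i - (∑ k, (M k)⁻¹ * v k) * y i = -lam * B.mulVec v i) :
    0 < lam := by
  have hy0 : ∀ k, y k ≠ 0 := fun k => (hy k).1.ne'
  have hM0 : ∀ k, M k ≠ 0 := fun k => (hM k).ne'
  have hfnn : ∀ i j, 0 ≤ f i j := by
    intro i j
    rcases eq_or_ne i j with h | h
    · simp [h, hdiag]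
    · exact (hpos i j h).le
  set s : ℝ := ∑ k, (M k)⁻¹ * v k with hs
  -- S1 > 0
  have hS1 : 0 < ∑ i, (M i)⁻¹ * (v i)^2 / y i := by
    obtain ⟨i, hi⟩ := Function.ne_iff.mp hv0
    have hne : v i ≠ 0 := by simpa using hi
    apply Finset.sum_pos'
    · intro k _
      have h1 := (hM k).le
      have h2 := (hy k).1
      positivity
    · refine ⟨i, Finset.mem_univ i, ?_⟩
      have h3 : 0 < v i ^ 2 := lt_of_le_of_ne (sq_nonneg _) (Ne.symm (pow_ne_zero 2 hne))
      exact div_pos (mul_pos (inv_pos.mpr (hM i)) h3) (hy i).1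
  -- B.mulVec formula
  have hBv : ∀ i, B.mulVec v i
      = (∑ j, f i j * y i * v j) - (∑ l, f i l * y l) * v i := by
    intro i
    have h0 : B.mulVec v i = ∑ j, B i j * v j := by
      simp [Matrix.mulVec, dotProduct]
    rw [h0]
    have hterm : ∀ j, B i j * v j
        = f i j * y i * v j + (if j = i then (-(∑ l, f i l * y l)) * v i else 0) := by
      intro j
      rcases eq_or_ne j i with h | h
      · subst h
        simp [hB, hdiag]
      · simp [hB, Ne.symm h, h]
    rw [Finset.sum_congr rfl (fun j _ => hterm j)]
    rw [Finset.sum_add_distrib, Finset.sum_ite_eq' Finset.univ i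
      (fun _ => (-(∑ l, f i l * y l)) * v i)]
    simp
    ring
  -- key summed equation
  have key : (∑ i, (M i)⁻¹ * (v i)^2 / y i)
      = -lam * ∑ i, (B.mulVec v i) * (v i / y i) := by
    have h1 : ∑ i, (((M i)⁻¹ * v i - s * y i) * (v i / y i))
        = ∑ i, (-lam * B.mulVec v i) * (v i / y i) :=
      Finset.sum_congr rfl (fun i _ => by rw [heig i])
    have h2 : ∑ i, (((M i)⁻¹ * v i - s * y i) * (v i / y i))
        = (∑ i, (M i)⁻¹ * (v i)^2 / y i) - s * (∑ i, v i) := by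
      rw [Finset.mul_sum, ← Finset.sum_sub_distrib]
      refine Finset.sum_congr rfl (fun i _ => ?_)
      have hcancel := mul_inv_cancel₀ (hy0 i)
      linear_combination (-(s * v i)) * hcancel
    have h3 : ∑ i, (-lam * B.mulVec v i) * (v i / y i)
        = -lam * ∑ i, (B.mulVec v i) * (v i / y i) := by
      rw [Finset.mul_sum]
      exact Finset.sum_congr rfl (fun i _ => by ring)
    rw [← h3, ← h1, h2, hvE]
    ring
  -- quadratic form
  set Q : ℝ := ∑ i, ∑ j, f i j * y i * y j * (v i / y i - v j / y j)^2 with hQdef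
  have hC : ∑ i, (B.mulVec v i) * (v i / y i)
      = (∑ i, ∑ j, f i j * v i * v j) - (∑ i, ∑ j, f i j * y j * (v i)^2 / y i) := by
    rw [← Finset.sum_sub_distrib]
    refine Finset.sum_congr rfl (fun i _ => ?_)
    rw [hBv i, ← Finset.sum_sub_distrib]
    simp only [sub_mul, Finset.sum_mul]
    rw [← Finset.sum_sub_distrib]
    refine Finset.sum_congr rfl (fun j _ => ?_)
    field_simp [hy0 i]
  have hQexp : Q = (∑ i, ∑ j, (f i j * y j * (v i)^2 / y i
      + f i j * y i * (v j)^2 / y j - 2 * (f i j * v i * v j))) := by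
    rw [hQdef]
    refine Finset.sum_congr rfl (fun i _ => Finset.sum_congr rfl (fun j _ => ?_))
    field_simp [hy0 i, hy0 j]
    ring
  have hsplit : Q = (∑ i, ∑ j, f i j * y j * (v i)^2 / y i)
      + (∑ i, ∑ j, f i j * y i * (v j)^2 / y j)
      - 2 * (∑ i, ∑ j, f i j * v i * v j) := by
    rw [hQexp]
    simp only [Finset.sum_sub_distrib, Finset.sum_add_distrib, ← Finset.mul_sum]
  have hswap : (∑ i, ∑ j, f i j * y i * (v j)^2 / y j)
      = (∑ i, ∑ j, f i j * y j * (v i)^2 / y i) := by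
    rw [Finset.sum_comm]
    exact Finset.sum_congr rfl (fun i _ => Finset.sum_congr rfl
      (fun j _ => by rw [hsym j i]))
  rw [hswap] at hsplit
  have hT : ∑ i, (B.mulVec v i) * (v i / y i) = -(1/2) * Q := by
    rw [hC]; linarith
  have hQnn : 0 ≤ Q := by
    rw [hQdef]
    apply Finset.sum_nonneg
    intro i _
    apply Finset.sum_nonneg
    intro j _
    have h1 := hfnn i j
    have h2 := (hy i).1.le
    have h3 := (hy j).1.le
    positivity
  rw [hT] at key
  by_contra hl
  push_neg at hl
  nlinarith [hS1, hQnn, key]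
end

section
/- For y ∈ D̊, the matrix -A(y)P(y)Y is symmetric, where A(y) = (B(y)|_E)^{-1} extended by A(y)e-direction conventions as the composition with projection, P(y) = I - y e^T, Y = diag(y). Precisely: (A(y)P(y)Y v | w) = (v | A(y)P(y)Y w) for all v, w ∈ ℝ^N. -/
/-- For y ∈ D̊, the matrix -A(y)P(y)Y is symmetric, i.e.
(A(y)P(y)Y v | w) = (v | A(y)P(y)Y w) for all v, w. Here A(y)P(y)Y v is the
unique x ∈ E with B(y)x = P(y)Y v. -/
theorem maxwell_stefan_APY_symmetric
    (N : ℕ) (hN : 2 ≤ N) (f : Fin N → Fin N → ℝ)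
    (hsym : ∀ i j, f i j = f j i)
    (hpos : ∀ i j, i ≠ j → 0 < f i j)
    (hdiag : ∀ i, f i i = 0)
    (y : Fin N → ℝ)
    (hy : ∀ k, 0 < y k ∧ y k < 1) (hsum : ∑ k, y k = 1)
    (B : Matrix (Fin N) (Fin N) ℝ)
    (hB : ∀ i j, B i j = if i = j then -(∑ l, f i l * y l) else f i j * y i)
    (v w xv xw : Fin N → ℝ)
    (hxvE : ∑ i, xv i = 0)
    (hxv : ∀ i, B.mulVec xv i = y i * v i - (∑ k, y k * v k) * y i)
    (hxwE : ∑ i, xw i = 0)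
    (hxw : ∀ i, B.mulVec xw i = y i * w i - (∑ k, y k * w k) * y i) :
    ∑ i, xv i * w i = ∑ i, v i * xw i := by
  have hy0 : ∀ i, y i ≠ 0 := fun i => (hy i).1.ne'
  -- LHS = ∑ i ∑ j (B i j / y i) xv i xw j
  have h1 : ∑ i, xv i * w i = ∑ i, ∑ j, (B i j / y i) * xv i * xw j := by
    have step : ∀ i, xv i * w i
        = (∑ j, (B i j / y i) * xv i * xw j) + (∑ k, y k * w k) * xv i := by
      intro i
      have hb := hxw i
      have key : xv i * w i = xv i * B.mulVec xw i / y i + (∑ k, y k * w k) * xv i := by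
        rw [hb]; field_simp [hy0 i]; ring
      have expand : xv i * B.mulVec xw i / y i = ∑ j, B i j / y i * xv i * xw j := by
        rw [Matrix.mulVec, dotProduct, Finset.mul_sum, Finset.sum_div]
        exact Finset.sum_congr rfl (fun j _ => by ring)
      rw [key, expand]
    calc ∑ i, xv i * w i
        = ∑ i, ((∑ j, (B i j / y i) * xv i * xw j) + (∑ k, y k * w k) * xv i) :=
          Finset.sum_congr rfl (fun i _ => step i)
      _ = (∑ i, ∑ j, (B i j / y i) * xv i * xw j) + (∑ k, y k * w k) * ∑ i, xv i := by
          rw [Finset.sum_add_distrib, Finset.mul_sum]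
      _ = ∑ i, ∑ j, (B i j / y i) * xv i * xw j := by rw [hxvE]; ring
  -- RHS = ∑ j ∑ i (B j i / y j) xv i xw j
  have h2 : ∑ i, v i * xw i = ∑ j, ∑ i, (B j i / y j) * xv i * xw j := by
    have step : ∀ j, v j * xw j
        = (∑ i, (B j i / y j) * xv i * xw j) + (∑ k, y k * v k) * xw j := by
      intro j
      have hb := hxv j
      have key : v j * xw j = B.mulVec xv j * xw j / y j + (∑ k, y k * v k) * xw j := by
        rw [hb]; field_simp [hy0 j]; ring
      have expand : B.mulVec xv j * xw j / y j = ∑ i, B j i / y j * xv i * xw j := by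
        rw [Matrix.mulVec, dotProduct, Finset.sum_mul, Finset.sum_div]
        exact Finset.sum_congr rfl (fun i _ => by ring)
      rw [key, expand]
    calc ∑ j, v j * xw j
        = ∑ j, ((∑ i, (B j i / y j) * xv i * xw j) + (∑ k, y k * v k) * xw j) :=
          Finset.sum_congr rfl (fun j _ => step j)
      _ = (∑ j, ∑ i, (B j i / y j) * xv i * xw j) + (∑ k, y k * v k) * ∑ j, xw j := by
          rw [Finset.sum_add_distrib, Finset.mul_sum]
      _ = ∑ j, ∑ i, (B j i / y j) * xv i * xw j := by rw [hxwE]; ring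
  rw [h1, h2, Finset.sum_comm]
  apply Finset.sum_congr rfl
  intro j _
  apply Finset.sum_congr rfl
  intro i _
  congr 1
  congr 1
  by_cases hij : i = j
  · subst hij; rfl
  · rw [hB i j, hB j i, if_neg hij, if_neg (Ne.symm hij)]
    rw [mul_div_assoc, mul_div_assoc, div_self (hy0 i), div_self (hy0 j), hsym]
end

section
/- For y ∈ D̊, the matrix -A(y)P(y)Y is positive semidefinite on ℝ^N, its kernel contains e, and its restriction to E is positive definite. -/
-- pure algebraic identity for the quadratic form
lemma ms_sum_identity (N : ℕ) (f : Fin N → Fin N → ℝ)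
    (hsym : ∀ i j, f i j = f j i)
    (y z : Fin N → ℝ) :
    ∑ i, z i * ((∑ j, f i j * y i * (y j * z j)) - (∑ j, f i j * y j) * (y i * z i))
      = -(1/2) * ∑ i, ∑ j, f i j * y i * y j * (z i - z j)^2 := by
  have l1 : ∀ i, z i * ((∑ j, f i j * y i * (y j * z j)) - (∑ j, f i j * y j) * (y i * z i))
      = ∑ j, (f i j * y i * y j * (z i * z j) - f i j * y i * y j * (z i)^2) := by
    intro i
    rw [mul_sub, Finset.mul_sum, Finset.sum_sub_distrib]
    congr 1
    · exact Finset.sum_congr rfl fun j _ => by ring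
    · rw [show z i * ((∑ j, f i j * y j) * (y i * z i)) = (∑ j, f i j * y j) * (y i * z i * z i) by ring,
        Finset.sum_mul]
      exact Finset.sum_congr rfl fun j _ => by ring
  simp_rw [l1, Finset.sum_sub_distrib]
  have l2 : ∀ i j, f i j * y i * y j * (z i - z j)^2
      = f i j * y i * y j * (z i)^2 - 2 * (f i j * y i * y j * (z i * z j)) + f i j * y i * y j * (z j)^2 := by
    intro i j; ring
  simp_rw [l2, Finset.sum_add_distrib, Finset.sum_sub_distrib, ← Finset.mul_sum]
  have hswap : (∑ i, ∑ j, f i j * y i * y j * (z j)^2) = ∑ i, ∑ j, f i j * y i * y j * (z i)^2 := by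
    rw [Finset.sum_comm]
    exact Finset.sum_congr rfl fun i _ => Finset.sum_congr rfl fun j _ => by rw [hsym]; ring
  rw [hswap]
  ring

lemma ms_row (N : ℕ) (f : Fin N → Fin N → ℝ)
    (hdiag : ∀ i, f i i = 0)
    (y : Fin N → ℝ)
    (B : Matrix (Fin N) (Fin N) ℝ)
    (hB : ∀ i j, B i j = if i = j then -(∑ l, f i l * y l) else f i j * y i)
    (x : Fin N → ℝ) (i : Fin N) :
    B.mulVec x i = (∑ j, f i j * y i * x j) - (∑ l, f i l * y l) * x i := by
  have h1 : B.mulVec x i = ∑ j, B i j * x j := by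
    simp [Matrix.mulVec, dotProduct]
  rw [h1]
  have h2 : ∀ j, B i j * x j
      = f i j * y i * x j + (if j = i then -(∑ l, f i l * y l) * x j else 0) := by
    intro j
    rw [hB]
    by_cases h : i = j
    · subst h; simp [hdiag]
    · simp [h, Ne.symm h]
  simp_rw [h2, Finset.sum_add_distrib, Finset.sum_ite_eq' Finset.univ i
    (fun j => -(∑ l, f i l * y l) * x j)]
  simp; ring

lemma ms_quad (N : ℕ) (f : Fin N → Fin N → ℝ)
    (hsym : ∀ i j, f i j = f j i)
    (hdiag : ∀ i, f i i = 0)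
    (y : Fin N → ℝ) (hy : ∀ k, 0 < y k)
    (B : Matrix (Fin N) (Fin N) ℝ)
    (hB : ∀ i j, B i j = if i = j then -(∑ l, f i l * y l) else f i j * y i)
    (x : Fin N → ℝ) :
    ∑ i, (x i / y i) * B.mulVec x i
      = -(1/2) * ∑ i, ∑ j, f i j * y i * y j * (x i / y i - x j / y j)^2 := by
  have hy0 : ∀ i, y i ≠ 0 := fun i => (hy i).ne'
  calc ∑ i, (x i / y i) * B.mulVec x i
      = ∑ i, (x i / y i) * ((∑ j, f i j * y i * (y j * (x j / y j)))
          - (∑ j, f i j * y j) * (y i * (x i / y i))) := by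
        refine Finset.sum_congr rfl fun i _ => ?_
        rw [ms_row N f hdiag y B hB x i]
        congr 2
        · exact Finset.sum_congr rfl fun j _ => by
            rw [mul_comm (y j), div_mul_cancel₀ _ (hy0 j)]
        · rw [mul_comm (y i), div_mul_cancel₀ _ (hy0 i)]
    _ = -(1/2) * ∑ i, ∑ j, f i j * y i * y j * (x i / y i - x j / y j)^2 :=
        ms_sum_identity N f hsym y (fun i => x i / y i)

lemma ms_DS_nonneg (N : ℕ) (f : Fin N → Fin N → ℝ)
    (hpos : ∀ i j, i ≠ j → 0 < f i j) (hdiag : ∀ i, f i i = 0)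
    (y : Fin N → ℝ) (hy : ∀ k, 0 < y k) (z : Fin N → ℝ) :
    0 ≤ ∑ i, ∑ j, f i j * y i * y j * (z i - z j)^2 := by
  have hfnn : ∀ i j, 0 ≤ f i j := by
    intro i j
    rcases eq_or_ne i j with h | h
    · simp [h, hdiag]
    · exact (hpos i j h).le
  refine Finset.sum_nonneg fun i _ => Finset.sum_nonneg fun j _ => ?_
  exact mul_nonneg (mul_nonneg (mul_nonneg (hfnn i j) (hy i).le) (hy j).le) (sq_nonneg _)

lemma ms_x_eq_zero (N : ℕ) (hN : 0 < N) (f : Fin N → Fin N → ℝ)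
    (hpos : ∀ i j, i ≠ j → 0 < f i j) (hdiag : ∀ i, f i i = 0)
    (y : Fin N → ℝ) (hy : ∀ k, 0 < y k) (hsum : ∑ k, y k = 1)
    (x : Fin N → ℝ) (hx0 : ∑ i, x i = 0)
    (hDS : ∑ i, ∑ j, f i j * y i * y j * (x i / y i - x j / y j)^2 = 0) :
    x = 0 := by
  have hy0 : ∀ i, y i ≠ 0 := fun i => (hy i).ne'
  have hfnn : ∀ i j, 0 ≤ f i j := by
    intro i j
    rcases eq_or_ne i j with h | h
    · simp [h, hdiag]
    · exact (hpos i j h).le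
  have hterm : ∀ i j, f i j * y i * y j * (x i / y i - x j / y j)^2 = 0 := by
    intro i j
    have h1 := (Finset.sum_eq_zero_iff_of_nonneg (fun i _ =>
      Finset.sum_nonneg fun j _ => mul_nonneg (mul_nonneg (mul_nonneg (hfnn i j)
        (hy i).le) (hy j).le) (sq_nonneg _))).mp hDS i (Finset.mem_univ i)
    exact (Finset.sum_eq_zero_iff_of_nonneg (fun j _ => mul_nonneg (mul_nonneg
      (mul_nonneg (hfnn i j) (hy i).le) (hy j).le) (sq_nonneg _))).mp h1 j (Finset.mem_univ j)
  have hzeq : ∀ i j, x i / y i = x j / y j := by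
    intro i j
    rcases eq_or_ne i j with h | h
    · rw [h]
    · have h2 := hterm i j
      have h3 : 0 < f i j * y i * y j :=
        mul_pos (mul_pos (hpos i j h) (hy i)) (hy j)
      have h4 : (x i / y i - x j / y j)^2 = 0 :=
        (mul_eq_zero.mp h2).resolve_left h3.ne'
      exact sub_eq_zero.mp (sq_eq_zero_iff.mp h4)
  set i0 : Fin N := ⟨0, hN⟩
  set c := x i0 / y i0 with hc
  have hxi : ∀ i, x i = c * y i := fun i => (div_eq_iff (hy0 i)).mp (hzeq i i0)
  have hc0 : c = 0 := by
    have : ∑ i, x i = c := by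
      simp_rw [hxi, ← Finset.mul_sum, hsum, mul_one]
    rw [hx0] at this
    exact this.symm
  funext i
  rw [hxi i, hc0]
  simp

/-- For y ∈ D̊, the matrix -A(y)P(y)Y is positive semidefinite on
ℝ^N, its kernel contains e, and its restriction to E is positive definite.
Here A(y)P(y)Y v is encoded as the unique x ∈ E with B(y)x = P(y)Y v. -/
theorem maxwell_stefan_APY_definiteness
    (N : ℕ) (hN : 2 ≤ N) (f : Fin N → Fin N → ℝ)
    (hsym : ∀ i j, f i j = f j i)
    (hpos : ∀ i j, i ≠ j → 0 < f i j)
    (hdiag : ∀ i, f i i = 0)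
    (y : Fin N → ℝ)
    (hy : ∀ k, 0 < y k ∧ y k < 1) (hsum : ∑ k, y k = 1)
    (B : Matrix (Fin N) (Fin N) ℝ)
    (hB : ∀ i j, B i j = if i = j then -(∑ l, f i l * y l) else f i j * y i) :
    -- positive semidefiniteness of -A(y)P(y)Y on ℝ^N
    (∀ v x : Fin N → ℝ, (∑ i, x i = 0) →
      (∀ i, B.mulVec x i = y i * v i - (∑ k, y k * v k) * y i) →
      0 ≤ -(∑ i, x i * v i)) ∧
    -- e belongs to the kernel: A(y)P(y)Y e = 0
    (∀ x : Fin N → ℝ, (∑ i, x i = 0) →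
      (∀ i, B.mulVec x i = y i * 1 - (∑ k, y k * 1) * y i) → x = 0) ∧
    -- positive definiteness on E
    (∀ v x : Fin N → ℝ, (∑ i, v i = 0) → v ≠ 0 → (∑ i, x i = 0) →
      (∀ i, B.mulVec x i = y i * v i - (∑ k, y k * v k) * y i) →
      0 < -(∑ i, x i * v i)) := by
  have hyp : ∀ k, 0 < y k := fun k => (hy k).1
  have hy0 : ∀ i, y i ≠ 0 := fun i => (hyp i).ne'
  have hNpos : 0 < N := by omega
  -- key: under the constraint, ∑ x v = ∑ (x/y) ⬝ Bx = -(1/2) DS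
  have key : ∀ v x : Fin N → ℝ, (∑ i, x i = 0) →
      (∀ i, B.mulVec x i = y i * v i - (∑ k, y k * v k) * y i) →
      ∑ i, x i * v i
        = -(1/2) * ∑ i, ∑ j, f i j * y i * y j * (x i / y i - x j / y j)^2 := by
    intro v x hx0 hBx
    have h1 : ∑ i, (x i / y i) * B.mulVec x i = ∑ i, x i * v i := by
      have h2 : ∀ i, (x i / y i) * B.mulVec x i
          = x i * v i - (∑ k, y k * v k) * x i := by
        intro i
        rw [hBx i, mul_sub]
        rw [show (x i / y i) * (y i * v i) = (x i / y i * y i) * v i by ring,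
          div_mul_cancel₀ _ (hy0 i),
          show (x i / y i) * ((∑ k, y k * v k) * y i)
            = (∑ k, y k * v k) * (x i / y i * y i) by ring,
          div_mul_cancel₀ _ (hy0 i)]
      simp_rw [h2, Finset.sum_sub_distrib, ← Finset.mul_sum, hx0, mul_zero, sub_zero]
    rw [← h1, ms_quad N f hsym hdiag y hyp B hB x]
  refine ⟨?_, ?_, ?_⟩
  · intro v x hx0 hBx
    have hDS := ms_DS_nonneg N f hpos hdiag y hyp (fun i => x i / y i)
    have := key v x hx0 hBx
    linarith
  · intro x hx0 hBx
    have hBx' : ∀ i, B.mulVec x i = y i * 1 - (∑ k, y k * 1) * y i := hBx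
    have h1 := key 1 x hx0 (by simpa using hBx)
    have h2 : ∑ i, x i * (1 : Fin N → ℝ) i = 0 := by
      simp [hx0]
    rw [h2] at h1
    have hDS : ∑ i, ∑ j, f i j * y i * y j * (x i / y i - x j / y j)^2 = 0 := by
      linarith
    exact ms_x_eq_zero N hNpos f hpos hdiag y hyp hsum x hx0 hDS
  · intro v x hv0 hvne hx0 hBx
    have hDSnn := ms_DS_nonneg N f hpos hdiag y hyp (fun i => x i / y i)
    have hk := key v x hx0 hBx
    rcases lt_or_eq_of_le hDSnn with h | h
    · rw [hk]; linarith
    · exfalso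
      have hx : x = 0 := ms_x_eq_zero N hNpos f hpos hdiag y hyp hsum x hx0 h.symm
      subst hx
      have hz : ∀ i, (0 : ℝ) = y i * v i - (∑ k, y k * v k) * y i := by
        intro i
        have := hBx i
        rwa [Matrix.mulVec_zero] at this
      have hvc : ∀ i, v i = ∑ k, y k * v k := by
        intro i
        have := hz i
        have h3 : y i * v i = (∑ k, y k * v k) * y i := by linarith
        have h4 : y i * v i = y i * (∑ k, y k * v k) := by linarith [h3]
        exact mul_left_cancel₀ (hy0 i) h4
      have hc : (∑ k, y k * v k) = 0 := by
        have h5 : ∑ i, v i = (N : ℝ) * (∑ k, y k * v k) := by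
          rw [Finset.sum_congr rfl fun i _ => hvc i]
          simp [Finset.sum_const, mul_comm]
        rw [hv0] at h5
        have hN0 : (N : ℝ) ≠ 0 := Nat.cast_ne_zero.mpr hNpos.ne'
        exact (mul_eq_zero.mp h5.symm).resolve_left hN0
      apply hvne
      funext i
      rw [Pi.zero_apply, hvc i, hc]
end

section
/- With the notation of reversible mass-action kinetics and a positive chemical equilibrium c_*: for c > 0, (log(c/c_*) | ∑_l ν_l r_l(c)) = 0 if and only if r_l(c) = 0 for every l = 1,...,m, i.e., c is itself a chemical equilibrium. -/
lemma log_sub_mul_sub_nonpos {a b : ℝ} (ha : 0 < a) (hb : 0 < b) :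
    (Real.log a - Real.log b) * (b - a) ≤ 0 := by
  rcases lt_trichotomy a b with h | h | h
  · have := Real.log_lt_log ha h
    nlinarith
  · simp [h]
  · have := Real.log_lt_log hb h
    nlinarith

lemma log_sub_mul_sub_eq_zero_iff {a b : ℝ} (ha : 0 < a) (hb : 0 < b) :
    (Real.log a - Real.log b) * (b - a) = 0 ↔ b - a = 0 := by
  constructor
  · intro h
    rcases lt_trichotomy a b with hab | hab | hab
    · have := Real.log_lt_log ha hab
      nlinarith
    · simp [hab]
    · have := Real.log_lt_log hb hab
      nlinarith
  · intro h; rw [h, mul_zero]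

/-- The entropy production (log(c/c_*) | ∑_l ν_l r_l(c)) vanishes
if and only if r_l(c) = 0 for every l, i.e. c is a chemical equilibrium. -/
theorem mass_action_entropy_production_zero_iff
    (N m : ℕ) (hN : 2 ≤ N)
    (νp νm : Fin m → Fin N → ℕ)
    (kp km : Fin m → ℝ) (hkp : ∀ l, 0 < kp l) (hkm : ∀ l, 0 < km l)
    (cstar : Fin N → ℝ) (hcstar : ∀ j, 0 < cstar j)
    (heq : ∀ l, ∏ j, (cstar j) ^ ((νp l j : ℤ) - (νm l j : ℤ)) = km l / kp l)
    (c : Fin N → ℝ) (hc : ∀ j, 0 < c j) :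
    (∑ i, Real.log (c i / cstar i) *
      (∑ l, ((νp l i : ℝ) - (νm l i : ℝ)) *
        (-(kp l) * ∏ j, (c j) ^ (νp l j) + km l * ∏ j, (c j) ^ (νm l j))) = 0)
    ↔ ∀ l, -(kp l) * ∏ j, (c j) ^ (νp l j) + km l * ∏ j, (c j) ^ (νm l j) = 0 := by
  set A : Fin m → ℝ := fun l => kp l * ∏ j, (c j) ^ (νp l j) with hAdef
  set B : Fin m → ℝ := fun l => km l * ∏ j, (c j) ^ (νm l j) with hBdef
  have hA : ∀ l, 0 < A l := fun l =>
    mul_pos (hkp l) (Finset.prod_pos fun j _ => pow_pos (hc j) _)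
  have hB : ∀ l, 0 < B l := fun l =>
    mul_pos (hkm l) (Finset.prod_pos fun j _ => pow_pos (hc j) _)
  have hR : ∀ l, -(kp l) * ∏ j, (c j) ^ (νp l j) + km l * ∏ j, (c j) ^ (νm l j)
      = B l - A l := by
    intro l; simp only [hAdef, hBdef]; ring
  -- key: ∑ i (νp - νm) log (c i / cstar i) = log (A l) - log (B l)
  have key : ∀ l, ∑ i, Real.log (c i / cstar i) * ((νp l i : ℝ) - (νm l i : ℝ))
      = Real.log (A l) - Real.log (B l) := by
    intro l
    have hstar : ∑ i, ((νp l i : ℝ) - (νm l i : ℝ)) * Real.log (cstar i)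
        = Real.log (km l) - Real.log (kp l) := by
      have h1 := congrArg Real.log (heq l)
      rw [Real.log_prod (fun j _ => zpow_ne_zero _ (hcstar j).ne'),
          Real.log_div (hkm l).ne' (hkp l).ne'] at h1
      rw [← h1]
      refine Finset.sum_congr rfl fun j _ => ?_
      rw [Real.log_zpow]
      push_cast; ring
    have hlogA : Real.log (A l) = Real.log (kp l) + ∑ j, (νp l j : ℝ) * Real.log (c j) := by
      rw [hAdef]
      rw [Real.log_mul (hkp l).ne' (Finset.prod_pos fun j _ => pow_pos (hc j) _).ne',
          Real.log_prod (fun j _ => (pow_pos (hc j) _).ne')]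
      simp [Real.log_pow]
    have hlogB : Real.log (B l) = Real.log (km l) + ∑ j, (νm l j : ℝ) * Real.log (c j) := by
      rw [hBdef]
      rw [Real.log_mul (hkm l).ne' (Finset.prod_pos fun j _ => pow_pos (hc j) _).ne',
          Real.log_prod (fun j _ => (pow_pos (hc j) _).ne')]
      simp [Real.log_pow]
    have expand : ∑ i, Real.log (c i / cstar i) * ((νp l i : ℝ) - (νm l i : ℝ))
        = (∑ i, (νp l i : ℝ) * Real.log (c i)) - (∑ i, (νm l i : ℝ) * Real.log (c i))
          - ∑ i, ((νp l i : ℝ) - (νm l i : ℝ)) * Real.log (cstar i) := by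
      rw [← Finset.sum_sub_distrib, ← Finset.sum_sub_distrib]
      refine Finset.sum_congr rfl fun i _ => ?_
      rw [Real.log_div (hc i).ne' (hcstar i).ne']
      ring
    rw [expand, hstar, hlogA, hlogB]
    ring
  -- rewrite the entropy production
  have main : ∑ i, Real.log (c i / cstar i) *
      (∑ l, ((νp l i : ℝ) - (νm l i : ℝ)) *
        (-(kp l) * ∏ j, (c j) ^ (νp l j) + km l * ∏ j, (c j) ^ (νm l j)))
      = ∑ l, (Real.log (A l) - Real.log (B l)) * (B l - A l) := by
    simp_rw [hR, Finset.mul_sum]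
    rw [Finset.sum_comm]
    refine Finset.sum_congr rfl fun l _ => ?_
    rw [← key l, Finset.sum_mul]
    refine Finset.sum_congr rfl fun i _ => ?_
    ring
  rw [main]
  rw [Finset.sum_eq_zero_iff_of_nonpos
    (fun l _ => log_sub_mul_sub_nonpos (hA l) (hB l))]
  constructor
  · intro h l
    have := (log_sub_mul_sub_eq_zero_iff (hA l) (hB l)).mp (h l (Finset.mem_univ l))
    rw [hR l]; linarith
  · intro h l _
    rw [(log_sub_mul_sub_eq_zero_iff (hA l) (hB l))]
    have := h l; rw [hR l] at this; linarith
end
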